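/- The history record of a β-step determines the redex: for terms E, E′ each containing the variable x free and values v, v′, if Ē_x = Ē′_x and E[v/x] = E′[v′/x], then E = E′ and v = v′. Here Ē_x is the skeleton of E obtained by replacing every maximal subterm not containing x free by the placeholder ⊥, and E[v/x] is capture-avoiding substitution. -/
import Mathlib


namespace ClassicalLambda

/-- Terms of the classical lambda calculus in de Bruijn representation
(so that terms are automatically identified up to renaming of bound
variables), with constants (constant 0 is the placeholder ⊥). -/
inductive DTerm where
  | var (n : ℕ)
  | lam (b : DTerm)
  | app (a b : DTerm)
  | const (c : ℕ)
  deriving DecidableEq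

open DTerm

/-- The placeholder symbol ⊥. -/
def ph : DTerm := const 0

/-- Shift the free variables ≥ k up by d. -/
def lift (d : ℕ) : ℕ → DTerm → DTerm
  | k, var n => if n < k then var n else var (n + d)
  | k, lam b => lam (lift d (k + 1) b)
  | k, app a b => app (lift d k a) (lift d k b)
  | _, const c => const c

/-- Capture-avoiding substitution of v for the free variable k. -/
def substVar : DTerm → ℕ → DTerm → DTerm
  | var n, k, v => if n = k then lift k 0 v else if k < n then var (n - 1) else var n
  | lam b, k, v => lam (substVar b (k + 1) v)
  | app a b, k, v => app (substVar a k v) (substVar b k v)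
  | const c, _, _ => const c

/-- β-reduction substitution: instantiate the outermost binder with v. -/
def instantiate (b v : DTerm) : DTerm := substVar b 0 v

/-- Whether the free variable k occurs in a term. -/
def occurs : ℕ → DTerm → Bool
  | k, var n => n = k
  | k, lam b => occurs (k + 1) b
  | k, app a b => occurs k a || occurs k b
  | _, const _ => false

/-- The skeleton Ē_x (for x the free variable k): replace every maximal
subterm in which k does not occur free by the placeholder ⊥, keeping k. -/
def skel : ℕ → DTerm → DTerm
  | k, var n => if n = k then var n else ph
  | k, lam b => if occurs (k + 1) b then lam (skel (k + 1) b) else ph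
  | k, app a b => if occurs k a || occurs k b then app (skel k a) (skel k b) else ph
  | _, const _ => ph


/-- Values: variables, constants, and abstractions. -/
def IsValue : DTerm → Prop
  | var _ => True
  | const _ => True
  | lam _ => True
  | app _ _ => False

/-- The history record of a β-step determines the redex: if
the free variable k occurs in both E and E′, v and v′ are values, the
skeletons Ē_k and Ē′_k agree, and E[v/k] = E′[v′/k], then E = E′ and v = v′. -/
lemma lift_inj (v w : DTerm) : ∀ d k, lift d k v = lift d k w → v = w := by
  induction v generalizing w with
  | var n =>
    intro d k h
    cases w with
    | var m =>
      simp only [lift] at h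
      split_ifs at h <;> simp_all <;> omega
    | lam b => simp [lift] at h; split_ifs at h <;> simp_all
    | app a b => simp [lift] at h; split_ifs at h <;> simp_all
    | const c => simp [lift] at h; split_ifs at h <;> simp_all
  | lam b ih =>
    intro d k h
    cases w <;> simp [lift] at h <;> try (split_ifs at h <;> simp_all)
    exact congrArg DTerm.lam (ih _ _ _ h)
  | app a b iha ihb =>
    intro d k h
    cases w <;> simp [lift] at h <;> try (split_ifs at h <;> simp_all)
    exact congrArg₂ DTerm.app (iha _ _ _ h.1) (ihb _ _ _ h.2)
  | const c =>
    intro d k h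
    cases w with
    | var m => simp [lift] at h; split_ifs at h <;> simp_all
    | lam b => simp [lift] at h
    | app a b => simp [lift] at h
    | const c' => simp [lift] at h; simp [h]

lemma skel_of_not_occurs (t : DTerm) : ∀ k, occurs k t = false → skel k t = ph := by
  induction t <;> intro k h <;> simp_all [occurs, skel]

lemma skel_ne_ph (t : DTerm) (k : ℕ) (h : occurs k t = true) : skel k t ≠ ph := by
  cases t <;> simp_all [occurs, skel, ph]

lemma subst_noocc_inj (s : DTerm) : ∀ t k v w, occurs k s = false → occurs k t = false →
    substVar s k v = substVar t k w → s = t := by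
  induction s with
  | var n =>
    intro t k v w hs ht h
    cases t with
    | var m =>
      simp [occurs] at hs ht
      simp only [substVar, if_neg hs, if_neg ht] at h
      split_ifs at h <;> simp_all <;> omega
    | lam b => simp [occurs] at hs; simp [substVar, hs] at h; split_ifs at h <;> simp_all
    | app a b => simp [occurs] at hs; simp [substVar, hs] at h; split_ifs at h <;> simp_all
    | const c => simp [occurs] at hs; simp [substVar, hs] at h; split_ifs at h <;> simp_all
  | lam b ih =>
    intro t k v w hs ht h
    cases t with
    | var m => simp [occurs] at ht; simp [substVar, ht] at h; split_ifs at h <;> simp_all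
    | lam b' =>
      simp [occurs] at hs ht; simp [substVar] at h
      exact congrArg DTerm.lam (ih _ _ _ _ hs ht h)
    | app a b' => simp [substVar] at h
    | const c => simp [substVar] at h
  | app a b iha ihb =>
    intro t k v w hs ht h
    cases t with
    | var m => simp [occurs] at ht; simp [substVar, ht] at h; split_ifs at h <;> simp_all
    | lam b' => simp [substVar] at h
    | app a' b' =>
      simp [occurs] at hs ht; simp [substVar] at h
      exact congrArg₂ DTerm.app (iha _ _ _ _ hs.1 ht.1 h.1) (ihb _ _ _ _ hs.2 ht.2 h.2)
    | const c => simp [substVar] at h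
  | const c =>
    intro t k v w hs ht h
    cases t with
    | var m => simp [occurs] at ht; simp [substVar, ht] at h; split_ifs at h <;> simp_all
    | lam b' => simp [substVar] at h
    | app a' b' => simp [substVar] at h
    | const c' => simp [substVar] at h; simp [h]

theorem skeleton_subst_injective (k : ℕ) (E E' v v' : DTerm)
    (hE : occurs k E = true) (hE' : occurs k E' = true)
    (hv : IsValue v) (hv' : IsValue v')
    (hskel : skel k E = skel k E')
    (hsub : substVar E k v = substVar E' k v') :
    E = E' ∧ v = v' := by
  clear hv hv'
  induction E generalizing k E' with
  | var n =>
    simp [occurs] at hE; subst hE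
    cases E' with
    | var m =>
      simp [occurs] at hE'; subst hE'
      simp [substVar] at hsub
      exact ⟨rfl, lift_inj v v' _ _ hsub⟩
    | lam b => simp [occurs] at hE'; simp [skel, hE', ph] at hskel
    | app a b => simp [occurs] at hE'; simp [skel, hE', ph] at hskel
    | const c => simp [occurs] at hE'
  | lam b ih =>
    simp only [occurs] at hE
    cases E' with
    | var m => simp [occurs] at hE'; subst hE'; simp [skel, hE, ph] at hskel
    | lam b' =>
      simp only [occurs] at hE'
      simp only [skel, hE, hE', if_true, DTerm.lam.injEq] at hskel
      simp only [substVar, DTerm.lam.injEq] at hsub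
      obtain ⟨h1, h2⟩ := ih (k + 1) b' hE hE' hskel hsub
      exact ⟨congrArg DTerm.lam h1, h2⟩
    | app a' b' => simp [occurs] at hE'; simp [skel, hE, hE', ph] at hskel
    | const c => simp [occurs] at hE'
  | app a b iha ihb =>
    simp only [occurs] at hE
    cases E' with
    | var m => simp [occurs] at hE'; subst hE'; simp [skel, hE, ph] at hskel
    | lam b' => simp [occurs] at hE'; simp [skel, hE, hE', ph] at hskel
    | app a' b' =>
      simp only [occurs] at hE'
      simp only [skel, hE, hE', if_true, DTerm.app.injEq] at hskel
      simp only [substVar, DTerm.app.injEq] at hsub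
      obtain ⟨hsk1, hsk2⟩ := hskel
      obtain ⟨hsb1, hsb2⟩ := hsub
      rw [Bool.or_eq_true] at hE hE'
      by_cases ha : occurs k a = true
      · have ha' : occurs k a' = true := by
          by_contra h
          exact skel_ne_ph a k ha (hsk1.trans (skel_of_not_occurs a' k (by simpa using h)))
        obtain ⟨h1, h2⟩ := iha k a' ha ha' hsk1 hsb1
        subst h2
        by_cases hb : occurs k b = true
        · have hb' : occurs k b' = true := by
            by_contra h
            exact skel_ne_ph b k hb (hsk2.trans (skel_of_not_occurs b' k (by simpa using h)))
          obtain ⟨h3, _⟩ := ihb k b' hb hb' hsk2 hsb2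
          exact ⟨by rw [h1, h3], rfl⟩
        · have hb' : occurs k b' = false := by
            by_contra h
            exact skel_ne_ph b' k (by simpa using h)
              (hsk2.symm.trans (skel_of_not_occurs b k (by simpa using hb)))
          have h3 := subst_noocc_inj b b' k v v (by simpa using hb) hb' hsb2
          exact ⟨by rw [h1, h3], rfl⟩
      · have hb : occurs k b = true := hE.resolve_left ha
        have ha2 : occurs k a = false := by simpa using ha
        have ha' : occurs k a' = false := by
          by_contra h
          exact skel_ne_ph a' k (by simpa using h)
            (hsk1.symm.trans (skel_of_not_occurs a k ha2))
        have hb' : occurs k b' = true := hE'.resolve_left (by simp [ha'])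
        obtain ⟨h3, h2⟩ := ihb k b' hb hb' hsk2 hsb2
        subst h2
        have h1 := subst_noocc_inj a a' k v v ha2 ha' hsb1
        exact ⟨by rw [h1, h3], rfl⟩
    | const c => simp [occurs] at hE'
  | const c => simp [occurs] at hE


end ClassicalLambda
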